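/- Let f be a univariate real polynomial of degree at most 2d, let a, b ∈ ℝ with (a,b) ≠ (0,0), and let A = aR + bS be the (d+2)×(d+1) real matrix where R is the matrix with R_{i+1,i} = 1 for i = 1,…,d+1 and zeros elsewhere, and S is the matrix with S_{i,i} = 1 for i = 1,…,d+1 and zeros elsewhere. Then the map M ↦ A M Aᵀ is an injective affine (indeed linear) map that carries the Gram spectrahedron of f bijectively onto the Gram spectrahedron of (ax+b)²·f. -/

import Mathlib

open Polynomial Finset Matrix

/-- The Gram spectrahedron of a univariate real polynomial `g` of degree at most `2m`:
the set of positive semidefinite real symmetric `(m+1) × (m+1)` matrices `Q` with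
`g = Xᵀ Q X`, where `X = (1, x, …, x^m)ᵀ`. -/
def GramS (m : ℕ) (g : Polynomial ℝ) : Set (Matrix (Fin (m + 1)) (Fin (m + 1)) ℝ) :=
  {Q | Q.PosSemidef ∧
    g = ∑ i : Fin (m + 1), ∑ j : Fin (m + 1), C (Q i j) * X ^ ((i : ℕ) + (j : ℕ))}

/-- The `(d+2) × (d+1)` matrix `R` with `R_{i+1,i} = 1` and zeros elsewhere. -/
def Rmat (d : ℕ) : Matrix (Fin (d + 2)) (Fin (d + 1)) ℝ :=
  fun i j => if (i : ℕ) = (j : ℕ) + 1 then 1 else 0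

/-- The `(d+2) × (d+1)` matrix `S` with `S_{i,i} = 1` and zeros elsewhere. -/
def Smat (d : ℕ) : Matrix (Fin (d + 2)) (Fin (d + 1)) ℝ :=
  fun i j => if (i : ℕ) = (j : ℕ) then 1 else 0

lemma sum_if_eq {n m : ℕ} (hm : m < n) {α : Type*} [AddCommMonoid α] (g : Fin n → α) :
    (∑ i : Fin n, if (i : ℕ) = m then g i else 0) = g ⟨m, hm⟩ := by
  rw [Finset.sum_eq_single (⟨m, hm⟩ : Fin n)]
  · simp
  · intro i _ hne
    exact if_neg (fun h => hne (Fin.ext h))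
  · simp

lemma colA (d : ℕ) (a b : ℝ) (k : Fin (d + 1)) :
    (∑ i : Fin (d + 2), C ((a • Rmat d + b • Smat d) i k) * X ^ (i : ℕ))
      = (C a * X + C b) * X ^ (k : ℕ) := by
  have h1 : ∀ i : Fin (d + 2), C ((a • Rmat d + b • Smat d) i k) * X ^ (i : ℕ)
      = ((if (i : ℕ) = (k : ℕ) + 1 then C a * X ^ (i : ℕ) else 0)
        + (if (i : ℕ) = (k : ℕ) then C b * X ^ (i : ℕ) else 0)) := by
    intro i
    simp only [Matrix.add_apply, Matrix.smul_apply, Rmat, Smat, smul_eq_mul, mul_ite,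
      mul_one, mul_zero, map_add, apply_ite C, map_zero, add_mul, ite_mul, zero_mul]
  rw [Finset.sum_congr rfl (fun i _ => h1 i), Finset.sum_add_distrib,
    sum_if_eq (by omega) (fun i : Fin (d+2) => C a * X ^ (i : ℕ)),
    sum_if_eq (by omega) (fun i : Fin (d+2) => C b * X ^ (i : ℕ))]
  push_cast
  ring

lemma gram_dot (m : ℕ) (Q : Matrix (Fin m) (Fin m) ℝ) :
    (∑ i : Fin m, ∑ j : Fin m, C (Q i j) * X ^ ((i : ℕ) + (j : ℕ)))
      = (fun i : Fin m => (X : ℝ[X]) ^ (i : ℕ)) ⬝ᵥ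
          ((Q.map C) *ᵥ (fun i : Fin m => (X : ℝ[X]) ^ (i : ℕ))) := by
  simp only [dotProduct, mulVec, Matrix.map_apply, Finset.mul_sum]
  refine Finset.sum_congr rfl fun i _ => Finset.sum_congr rfl fun j _ => ?_
  rw [pow_add]; ring


lemma forward (d : ℕ) (a b : ℝ) (Q : Matrix (Fin (d + 1)) (Fin (d + 1)) ℝ) :
    (∑ i : Fin (d + 2), ∑ j : Fin (d + 2),
        C (((a • Rmat d + b • Smat d) * Q * (a • Rmat d + b • Smat d)ᵀ) i j)
          * X ^ ((i : ℕ) + (j : ℕ)))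
      = (C a * X + C b) ^ 2
          * ∑ k : Fin (d + 1), ∑ l : Fin (d + 1), C (Q k l) * X ^ ((k : ℕ) + (l : ℕ)) := by
  set A := a • Rmat d + b • Smat d with hA
  set v : Fin (d + 2) → ℝ[X] := fun i => (X : ℝ[X]) ^ (i : ℕ) with hv
  set w : Fin (d + 1) → ℝ[X] := fun k => (X : ℝ[X]) ^ (k : ℕ) with hw
  set p : ℝ[X] := C a * X + C b with hp
  have hAv : (A.map C)ᵀ *ᵥ v = p • w := by
    funext k
    simp only [mulVec, dotProduct, transpose_apply, Matrix.map_apply, Pi.smul_apply,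
      smul_eq_mul, hv, hw]
    exact colA d a b k
  rw [gram_dot, gram_dot, Matrix.map_mul, Matrix.map_mul, Matrix.transpose_map,
    Matrix.mul_assoc, ← Matrix.mulVec_mulVec, ← Matrix.mulVec_mulVec,
    dotProduct_mulVec, ← Matrix.mulVec_transpose]
  show ((A.map C)ᵀ *ᵥ v) ⬝ᵥ (Q.map C *ᵥ ((A.map C)ᵀ *ᵥ v)) = p ^ 2 * (w ⬝ᵥ Q.map C *ᵥ w)
  rw [hAv, mulVec_smul, smul_dotProduct, dotProduct_smul, smul_eq_mul, smul_eq_mul, sq]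
  ring

lemma hermit {k l : ℕ} (M : Matrix (Fin k) (Fin l) ℝ) : Mᴴ = Mᵀ := by
  ext i j; simp [conjTranspose_apply]

lemma master (d : ℕ) (f : Polynomial ℝ) (a b : ℝ) (hp : (C a * X + C b : ℝ[X]) ≠ 0)
    (B : Matrix (Fin (d + 1)) (Fin (d + 2)) ℝ) (u e : Fin (d + 2) → ℝ)
    (hBA : B * (a • Rmat d + b • Smat d) = 1)
    (hAB : (a • Rmat d + b • Smat d) * B = 1 - vecMulVec u e)
    (he : ∀ Q' ∈ GramS (d + 1) ((C a * X + C b) ^ 2 * f), Q' *ᵥ e = 0) :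
    Function.Injective
      (fun M : Matrix (Fin (d + 1)) (Fin (d + 1)) ℝ =>
        (a • Rmat d + b • Smat d) * M * (a • Rmat d + b • Smat d)ᵀ) ∧
    Set.BijOn
      (fun M : Matrix (Fin (d + 1)) (Fin (d + 1)) ℝ =>
        (a • Rmat d + b • Smat d) * M * (a • Rmat d + b • Smat d)ᵀ)
      (GramS d f) (GramS (d + 1) ((C a * X + C b) ^ 2 * f)) := by
  set A := a • Rmat d + b • Smat d with hA
  have hM : ∀ P : Matrix (Fin (d + 1)) (Fin (d + 1)) ℝ, B * (A * P * Aᵀ) * Bᵀ = P := by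
    intro P
    rw [Matrix.mul_assoc A P, ← Matrix.mul_assoc B A, hBA, Matrix.one_mul,
      Matrix.mul_assoc P Aᵀ, ← Matrix.transpose_mul, hBA, Matrix.transpose_one,
      Matrix.mul_one]
  have hinj : Function.Injective
      (fun M : Matrix (Fin (d + 1)) (Fin (d + 1)) ℝ => A * M * Aᵀ) := by
    intro M N h
    simp only at h
    calc M = B * (A * M * Aᵀ) * Bᵀ := (hM M).symm
      _ = B * (A * N * Aᵀ) * Bᵀ := by rw [h]
      _ = N := hM N
  have hmaps : Set.MapsTo (fun M : Matrix (Fin (d + 1)) (Fin (d + 1)) ℝ => A * M * Aᵀ)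
      (GramS d f) (GramS (d + 1) ((C a * X + C b) ^ 2 * f)) := by
    intro Q hQ
    obtain ⟨hpsd, hgram⟩ := hQ
    refine ⟨?_, ?_⟩
    · have := hpsd.mul_mul_conjTranspose_same A
      rwa [hermit] at this
    · rw [hgram]
      exact (forward d a b Q).symm
  have hsurj : Set.SurjOn (fun M : Matrix (Fin (d + 1)) (Fin (d + 1)) ℝ => A * M * Aᵀ)
      (GramS d f) (GramS (d + 1) ((C a * X + C b) ^ 2 * f)) := by
    intro Q' hQ'
    obtain ⟨hpsd, hgram⟩ := hQ'
    have hsym : Q'ᵀ = Q' := by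
      rw [← hermit]; exact hpsd.1.eq
    have hcol : Q' *ᵥ e = 0 := he Q' ⟨hpsd, hgram⟩
    have hWQ : vecMulVec u e * Q' = 0 := by
      ext i k
      simp only [Matrix.mul_apply, vecMulVec_apply, Matrix.zero_apply]
      calc ∑ j, u i * e j * Q' j k = u i * ∑ j, Q'ᵀ k j * e j := by
            rw [Finset.mul_sum]
            exact Finset.sum_congr rfl fun j _ => by rw [Matrix.transpose_apply]; ring
        _ = u i * ((Q'ᵀ *ᵥ e) k) := rfl
        _ = 0 := by rw [hsym, hcol]; simp
    have hQW : Q' * (vecMulVec u e)ᵀ = 0 := by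
      have h0 := congrArg Matrix.transpose hWQ
      rw [Matrix.transpose_mul, hsym] at h0
      simpa using h0
    have hkey : A * (B * Q' * Bᵀ) * Aᵀ = Q' := by
      have h1 : A * (B * Q' * Bᵀ) * Aᵀ = (A * B) * Q' * (A * B)ᵀ := by
        rw [Matrix.transpose_mul]
        rw [← Matrix.mul_assoc, ← Matrix.mul_assoc, ← Matrix.mul_assoc,
          Matrix.mul_assoc (A * B * Q')]
      rw [h1, hAB, Matrix.transpose_sub, Matrix.transpose_one, Matrix.sub_mul,
        Matrix.one_mul, hWQ, sub_zero, Matrix.mul_sub, Matrix.mul_one, hQW, sub_zero]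
    refine ⟨B * Q' * Bᵀ, ⟨?_, ?_⟩, hkey⟩
    · have := hpsd.mul_mul_conjTranspose_same B
      rwa [hermit] at this
    · have h2 := forward d a b (B * Q' * Bᵀ)
      rw [hkey, ← hgram] at h2
      exact mul_left_cancel₀ (pow_ne_zero 2 hp) h2
  exact ⟨hinj, hmaps, hinj.injOn, hsurj⟩

lemma coeff_top (m : ℕ) (Q : Matrix (Fin (m + 1)) (Fin (m + 1)) ℝ) :
    (∑ i : Fin (m + 1), ∑ j : Fin (m + 1), C (Q i j) * X ^ ((i : ℕ) + (j : ℕ))).coeff (2 * m)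
      = Q (Fin.last m) (Fin.last m) := by
  rw [Polynomial.finset_sum_coeff]
  have hterm : ∀ i : Fin (m + 1),
      (∑ j : Fin (m + 1), C (Q i j) * X ^ ((i : ℕ) + (j : ℕ))).coeff (2 * m)
        = ∑ j : Fin (m + 1), if 2 * m = (i : ℕ) + (j : ℕ) then Q i j else 0 := by
    intro i
    rw [Polynomial.finset_sum_coeff]
    exact Finset.sum_congr rfl fun j _ => by
      rw [Polynomial.coeff_C_mul, Polynomial.coeff_X_pow, mul_boole]
  rw [Finset.sum_congr rfl fun i _ => hterm i]
  rw [Finset.sum_eq_single (Fin.last m)]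
  · rw [Finset.sum_eq_single (Fin.last m)]
    · simp [two_mul]
    · intro j _ hj
      have : (j : ℕ) ≠ m := fun h => hj (Fin.ext (by simp [h, Fin.val_last]))
      exact if_neg (by have := j.isLt; simp [Fin.val_last]; omega)
    · simp
  · intro i _ hi
    have hiv : (i : ℕ) ≠ m := fun h => hi (Fin.ext (by simp [h, Fin.val_last]))
    apply Finset.sum_eq_zero
    intro j _
    exact if_neg (by have := i.isLt; have := j.isLt; omega)
  · simp


lemma case0_BA (d : ℕ) (b : ℝ) (hb : b ≠ 0) :
    (b⁻¹ • (Smat d)ᵀ) * ((0 : ℝ) • Rmat d + b • Smat d) = 1 := by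
  ext j k
  have hsum : ((b⁻¹ • (Smat d)ᵀ) * ((0 : ℝ) • Rmat d + b • Smat d)) j k
      = ∑ i : Fin (d + 2),
          if (i : ℕ) = (j : ℕ) then (if (i : ℕ) = (k : ℕ) then b⁻¹ * b else 0) else 0 := by
    rw [Matrix.mul_apply]
    refine Finset.sum_congr rfl fun i _ => ?_
    simp only [Matrix.add_apply, Matrix.smul_apply, Matrix.transpose_apply, Rmat, Smat,
      smul_eq_mul]
    by_cases h1 : (i : ℕ) = (j : ℕ) <;> by_cases h2 : (i : ℕ) = (k : ℕ) <;>
      simp [h1, h2]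
  rw [hsum, sum_if_eq (show (j : ℕ) < d + 2 by omega)]
  simp only [inv_mul_cancel₀ hb, Matrix.one_apply, Fin.ext_iff]

lemma case0_AB (d : ℕ) (b : ℝ) (hb : b ≠ 0) :
    ((0 : ℝ) • Rmat d + b • Smat d) * (b⁻¹ • (Smat d)ᵀ)
      = 1 - vecMulVec (Pi.single (Fin.last (d + 1)) 1) (Pi.single (Fin.last (d + 1)) 1) := by
  ext i k
  have hsum : (((0 : ℝ) • Rmat d + b • Smat d) * (b⁻¹ • (Smat d)ᵀ)) i k
      = ∑ j : Fin (d + 1),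
          if (j : ℕ) = (i : ℕ) then (if (k : ℕ) = (j : ℕ) then b * b⁻¹ else 0) else 0 := by
    rw [Matrix.mul_apply]
    refine Finset.sum_congr rfl fun j _ => ?_
    simp only [Matrix.add_apply, Matrix.smul_apply, Matrix.transpose_apply, Rmat, Smat,
      smul_eq_mul]
    by_cases h1 : (i : ℕ) = (j : ℕ) <;> by_cases h2 : (k : ℕ) = (j : ℕ) <;>
      simp [h1, h2, eq_comm]
  rw [hsum]
  rw [Matrix.sub_apply, Matrix.one_apply, vecMulVec_apply]
  by_cases hi : (i : ℕ) < d + 1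
  · rw [sum_if_eq hi]
    have hil : i ≠ Fin.last (d + 1) := fun h => by
      rw [h] at hi; simp at hi
    by_cases hik : (k : ℕ) = (i : ℕ)
    · rw [if_pos hik, mul_inv_cancel₀ hb]
      have hik' : i = k := Fin.ext hik.symm
      simp [← hik', hil, Pi.single_apply]
    · rw [if_neg hik]
      have : ¬ i = k := fun h => hik (by rw [h])
      simp [this, hil, Pi.single_apply]
  · have hil : i = Fin.last (d + 1) := Fin.ext (by have := i.isLt; simp; omega)
    rw [Finset.sum_eq_zero (fun j _ => if_neg (by have := j.isLt; omega))]
    by_cases hk : k = Fin.last (d + 1)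
    · simp [hil, hk, Pi.single_apply]
    · have : ¬ i = k := fun h => hk (by rw [← h, hil])
      simp [this, hil, hk, Pi.single_apply, eq_comm]

lemma case0_he (d : ℕ) (f : Polynomial ℝ) (hdeg : f.natDegree ≤ 2 * d) (b : ℝ) :
    ∀ Q' ∈ GramS (d + 1) ((C (0 : ℝ) * X + C b) ^ 2 * f),
      Q' *ᵥ Pi.single (Fin.last (d + 1)) 1 = 0 := by
  rintro Q' ⟨hpsd, hgram⟩
  set e : Fin (d + 2) → ℝ := Pi.single (Fin.last (d + 1)) 1 with he
  have htop : Q' (Fin.last (d + 1)) (Fin.last (d + 1)) = 0 := by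
    have hc := congrArg (fun q : ℝ[X] => q.coeff (2 * (d + 1))) hgram
    rw [coeff_top (d + 1) Q'] at hc
    have h0 : ((C (0 : ℝ) * X + C b) ^ 2 * f).coeff (2 * (d + 1)) = 0 := by
      apply coeff_eq_zero_of_natDegree_lt
      have heq : (C (0 : ℝ) * X + C b) ^ 2 * f = C (b ^ 2) * f := by
        rw [map_zero, zero_mul, zero_add, map_pow]
      rw [heq]
      calc (C (b ^ 2) * f).natDegree ≤ f.natDegree := natDegree_C_mul_le _ _
        _ < 2 * (d + 1) := by omega
    rw [h0] at hc
    exact hc.symm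
  have hdot : star e ⬝ᵥ Q' *ᵥ e = 0 := by
    have hse : star e = e := funext fun i => star_trivial _
    rw [hse, he, Matrix.mulVec_single, single_dotProduct]
    simpa using htop
  exact (hpsd.dotProduct_mulVec_zero_iff e).mp hdot

noncomputable def Bmat (d : ℕ) (a b : ℝ) : Matrix (Fin (d + 1)) (Fin (d + 2)) ℝ :=
  fun j i => if (j : ℕ) < (i : ℕ) then a⁻¹ * (-(b / a)) ^ ((i : ℕ) - (j : ℕ) - 1) else 0

lemma case1_BA (d : ℕ) (a b : ℝ) (ha : a ≠ 0) :
    Bmat d a b * (a • Rmat d + b • Smat d) = 1 := by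
  ext j k
  have hsum : (Bmat d a b * (a • Rmat d + b • Smat d)) j k
      = (∑ i : Fin (d + 2), if (i : ℕ) = (k : ℕ) + 1 then Bmat d a b j i * a else 0)
        + (∑ i : Fin (d + 2), if (i : ℕ) = (k : ℕ) then Bmat d a b j i * b else 0) := by
    rw [Matrix.mul_apply, ← Finset.sum_add_distrib]
    refine Finset.sum_congr rfl fun i _ => ?_
    simp only [Matrix.add_apply, Matrix.smul_apply, Rmat, Smat, smul_eq_mul]
    by_cases h1 : (i : ℕ) = (k : ℕ) + 1 <;> by_cases h2 : (i : ℕ) = (k : ℕ) <;>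
      simp [h1, h2]
  rw [hsum, sum_if_eq (show (k : ℕ) + 1 < d + 2 by omega),
    sum_if_eq (show (k : ℕ) < d + 2 by omega), Matrix.one_apply]
  simp only [Bmat]
  rcases lt_trichotomy (j : ℕ) (k : ℕ) with h | h | h
  · rw [if_pos (show (j : ℕ) < (k : ℕ) + 1 by omega), if_pos h,
      if_neg (show ¬ j = k from fun hh => by rw [hh] at h; omega),
      show (k : ℕ) + 1 - (j : ℕ) - 1 = ((k : ℕ) - (j : ℕ) - 1) + 1 by omega, pow_succ]
    field_simp
    ring
  · rw [if_pos (show (j : ℕ) < (k : ℕ) + 1 by omega), if_neg (show ¬ (j : ℕ) < (k : ℕ) by omega),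
      if_pos (Fin.ext h), show (k : ℕ) + 1 - (j : ℕ) - 1 = 0 by omega, pow_zero]
    field_simp
    ring
  · rw [if_neg (show ¬ (j : ℕ) < (k : ℕ) + 1 by omega),
      if_neg (show ¬ (j : ℕ) < (k : ℕ) by omega),
      if_neg (show ¬ j = k from fun hh => by rw [hh] at h; omega)]
    ring

lemma case1_AB (d : ℕ) (a b : ℝ) (ha : a ≠ 0) :
    (a • Rmat d + b • Smat d) * Bmat d a b
      = 1 - vecMulVec (Pi.single (0 : Fin (d + 2)) 1) (fun i : Fin (d + 2) => (-(b / a)) ^ (i : ℕ)) := by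
  ext i k
  have hsum : ((a • Rmat d + b • Smat d) * Bmat d a b) i k
      = (∑ j : Fin (d + 1), if (i : ℕ) = (j : ℕ) + 1 then a * Bmat d a b j k else 0)
        + (∑ j : Fin (d + 1), if (i : ℕ) = (j : ℕ) then b * Bmat d a b j k else 0) := by
    rw [Matrix.mul_apply, ← Finset.sum_add_distrib]
    refine Finset.sum_congr rfl fun j _ => ?_
    simp only [Matrix.add_apply, Matrix.smul_apply, Rmat, Smat, smul_eq_mul]
    by_cases h1 : (i : ℕ) = (j : ℕ) + 1 <;> by_cases h2 : (i : ℕ) = (j : ℕ) <;>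
      simp [h1, h2]
  rw [hsum, Matrix.sub_apply, Matrix.one_apply, vecMulVec_apply]
  by_cases hi0 : (i : ℕ) = 0
  · have hs2' : (∑ j : Fin (d + 1), if (i : ℕ) = (j : ℕ) then b * Bmat d a b j k else 0)
        = ∑ j : Fin (d + 1), if (j : ℕ) = 0 then b * Bmat d a b j k else 0 :=
      Finset.sum_congr rfl fun j _ => if_congr (by omega) rfl rfl
    rw [Finset.sum_eq_zero (fun j _ => if_neg (by omega)), hs2',
      sum_if_eq (show 0 < d + 1 by omega)]
    have hi : i = 0 := Fin.ext (by simpa using hi0)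
    subst hi
    simp only [Bmat, Pi.single_eq_same, one_mul]
    by_cases hk0 : (k : ℕ) = 0
    · have hk : (0 : Fin (d + 2)) = k := Fin.ext (by simp [hk0])
      rw [if_neg (by omega), if_pos hk, hk0, pow_zero]
      simp
    · have hrk : (-(b / a)) ^ (k : ℕ) = (-(b / a)) ^ ((k : ℕ) - 1) * (-(b / a)) := by
        rw [← pow_succ]
        congr 1
        omega
      rw [if_pos (by omega : (0:ℕ) < (k : ℕ)),
        if_neg (show ¬ (0 : Fin (d+2)) = k from fun hh => hk0 (by rw [← hh]; rfl)), hrk]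
      simp only [Nat.sub_zero]
      field_simp
      ring
  · have hs1 : (∑ j : Fin (d + 1), if (i : ℕ) = (j : ℕ) + 1 then a * Bmat d a b j k else 0)
        = a * Bmat d a b ⟨(i : ℕ) - 1, by have := i.isLt; omega⟩ k := by
      have hs1' : (∑ j : Fin (d + 1), if (i : ℕ) = (j : ℕ) + 1 then a * Bmat d a b j k else 0)
          = ∑ j : Fin (d + 1), if (j : ℕ) = (i : ℕ) - 1 then a * Bmat d a b j k else 0 :=
        Finset.sum_congr rfl fun j _ => if_congr (by omega) rfl rfl
      rw [hs1', sum_if_eq (show (i : ℕ) - 1 < d + 1 by have := i.isLt; omega)]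
    have hne : i ≠ 0 := fun hh => hi0 (by rw [hh]; rfl)
    rw [hs1, Pi.single_eq_of_ne hne, zero_mul, sub_zero]
    by_cases hid : (i : ℕ) < d + 1
    · have hs2' : (∑ j : Fin (d + 1), if (i : ℕ) = (j : ℕ) then b * Bmat d a b j k else 0)
          = ∑ j : Fin (d + 1), if (j : ℕ) = (i : ℕ) then b * Bmat d a b j k else 0 :=
        Finset.sum_congr rfl fun j _ => if_congr (by omega) rfl rfl
      rw [hs2', sum_if_eq hid]
      simp only [Bmat]
      rcases lt_trichotomy (i : ℕ) (k : ℕ) with h | h | h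
      · rw [if_pos (show (i : ℕ) - 1 < (k : ℕ) by omega), if_pos h,
          show (k : ℕ) - ((i : ℕ) - 1) - 1 = ((k : ℕ) - (i : ℕ) - 1) + 1 by omega, pow_succ,
          if_neg (show ¬ i = k from fun hh => by rw [hh] at h; omega)]
        field_simp
        ring
      · rw [if_pos (show (i : ℕ) - 1 < (k : ℕ) by omega),
          if_neg (show ¬ (i : ℕ) < (k : ℕ) by omega),
          show (k : ℕ) - ((i : ℕ) - 1) - 1 = 0 by omega, pow_zero, if_pos (Fin.ext h)]
        field_simp
        ring
      · rw [if_neg (show ¬ (i : ℕ) - 1 < (k : ℕ) by omega),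
          if_neg (show ¬ (i : ℕ) < (k : ℕ) by omega),
          if_neg (show ¬ i = k from fun hh => by rw [hh] at h; omega)]
        ring
    · rw [Finset.sum_eq_zero (fun j _ => if_neg (by have := j.isLt; omega))]
      simp only [Bmat]
      by_cases hdk : (i : ℕ) - 1 < (k : ℕ)
      · have hik : i = k := Fin.ext (by have := i.isLt; have := k.isLt; omega)
        rw [if_pos hdk, show (k : ℕ) - ((i : ℕ) - 1) - 1 = 0 by
            have := i.isLt; have := k.isLt; omega, pow_zero, if_pos hik]
        field_simp
        ring
      · rw [if_neg hdk, if_neg (show ¬ i = k from fun hh => by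
          have : (i : ℕ) = (k : ℕ) := congrArg Fin.val hh
          omega)]
        ring

lemma case1_he (d : ℕ) (f : Polynomial ℝ) (a b : ℝ) (ha : a ≠ 0) :
    ∀ Q' ∈ GramS (d + 1) ((C a * X + C b) ^ 2 * f),
      Q' *ᵥ (fun i : Fin (d + 2) => (-(b / a)) ^ (i : ℕ)) = 0 := by
  rintro Q' ⟨hpsd, hgram⟩
  set r : ℝ := -(b / a) with hr
  set e : Fin (d + 2) → ℝ := fun i => r ^ (i : ℕ) with he
  have hev := congrArg (fun q : Polynomial ℝ => q.eval r) hgram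
  simp only [eval_mul, eval_pow, eval_add, eval_C, eval_X,
    Polynomial.eval_finset_sum] at hev
  have har : a * r + b = 0 := by
    rw [hr]
    field_simp
    ring
  rw [har, zero_pow (two_ne_zero), zero_mul] at hev
  have hdot : star e ⬝ᵥ Q' *ᵥ e = 0 := by
    have hse : star e = e := funext fun i => star_trivial _
    rw [hse]
    have hd : e ⬝ᵥ Q' *ᵥ e = ∑ i : Fin (d + 2), ∑ j : Fin (d + 2),
        Q' i j * r ^ ((i : ℕ) + (j : ℕ)) := by
      simp only [dotProduct, mulVec, he, Finset.mul_sum]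
      refine Finset.sum_congr rfl fun i _ => Finset.sum_congr rfl fun j _ => ?_
      rw [pow_add]
      ring
    rw [hd, ← hev]
  exact (hpsd.dotProduct_mulVec_zero_iff e).mp hdot

/-- For `f` univariate of degree at most `2d`, `(a, b) ≠ (0, 0)` and
`A = aR + bS`, the (linear, hence affine) map `M ↦ A M Aᵀ` is injective and carries the
Gram spectrahedron of `f` bijectively onto the Gram spectrahedron of `(ax + b)² · f`. -/
theorem stmt_10 (d : ℕ) (f : Polynomial ℝ) (hdeg : f.natDegree ≤ 2 * d)
    (a b : ℝ) (hab : (a, b) ≠ (0, 0)) :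
    Function.Injective
      (fun M : Matrix (Fin (d + 1)) (Fin (d + 1)) ℝ =>
        (a • Rmat d + b • Smat d) * M * (a • Rmat d + b • Smat d)ᵀ) ∧
    Set.BijOn
      (fun M : Matrix (Fin (d + 1)) (Fin (d + 1)) ℝ =>
        (a • Rmat d + b • Smat d) * M * (a • Rmat d + b • Smat d)ᵀ)
      (GramS d f) (GramS (d + 1) ((C a * X + C b) ^ 2 * f)) := by
  have hp : (C a * X + C b : Polynomial ℝ) ≠ 0 := by
    intro h
    have h1 : a = 0 := by simpa using congrArg (fun q : Polynomial ℝ => q.coeff 1) h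
    have h0 : b = 0 := by simpa using congrArg (fun q : Polynomial ℝ => q.coeff 0) h
    exact hab (by simp [h1, h0])
  by_cases ha : a = 0
  · subst ha
    have hb : b ≠ 0 := by
      intro h
      exact hab (by simp [h])
    exact master d f 0 b hp _ _ _ (case0_BA d b hb) (case0_AB d b hb) (case0_he d f hdeg b)
  · exact master d f a b hp (Bmat d a b) _ _ (case1_BA d a b ha) (case1_AB d a b ha)
      (case1_he d f a b ha)
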